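/- arXiv:1710.00393 — 2 statements merged into one kernel-verified Lean document; each statement's English description precedes it below -/
import Mathlib

section
/- A free continuous action G ↷ X of a countable discrete group on a zero-dimensional compact metric space is almost finite if and only if for every finite set K ⊆ G and δ > 0 there is a clopen castle whose shapes are (K,δ)-invariant and whose levels partition X. -/
open Pointwise MeasureTheory
open scoped ENNReal NNReal

namespace Kerr

section Basic

variable (G : Type) [Group G] (X : Type) [TopologicalSpace X] [MulAction G X]

/-- The action of `G` on `X` is free. -/
def IsFreeAction : Prop := ∀ (g : G) (x : X), g • x = x → g = 1

/-- The action of `G` on `X` is minimal: there is no proper nonempty closed invariant subset. -/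
def IsMinimalAction : Prop :=
  ∀ C : Set X, IsClosed C → (∀ g : G, g • C ⊆ C) → C = ∅ ∨ C = Set.univ

/-- `X` is zero-dimensional: it has a basis of clopen sets. -/
def ZeroDimensional : Prop :=
  ∀ (x : X) (U : Set X), IsOpen U → x ∈ U → ∃ V : Set X, IsClopen V ∧ x ∈ V ∧ V ⊆ U

/-- The dynamical subequivalence relation `A ≺ₘ B`: every closed subset `C` of `A` admits a
finite open cover `U` together with group elements `s u` and an `(m+1)`-colouring such that
the translates `s u • u` are contained in `B` and are pairwise disjoint within each colour. -/
def SubEquivM (m : ℕ) (A B : Set X) : Prop :=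
  ∀ C : Set X, IsClosed C → C ⊆ A →
    ∃ (U : Finset (Set X)) (s : Set X → G) (col : Set X → Fin (m + 1)),
      (∀ u ∈ U, IsOpen u) ∧
      (C ⊆ ⋃ u ∈ U, u) ∧
      (∀ u ∈ U, s u • u ⊆ B) ∧
      (∀ u ∈ U, ∀ v ∈ U, u ≠ v → col u = col v → Disjoint (s u • u) (s v • v))

/-- `(V, S)` is a tower: the translates `s • V`, `s ∈ S`, are pairwise disjoint. -/
def IsTower (V : Set X) (S : Finset G) : Prop :=
  ∀ s ∈ S, ∀ t ∈ S, s ≠ t → Disjoint (s • V) (t • V)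

/-- The union `S V` of the levels of the tower `(V, S)`. -/
def towerSpan (V : Set X) (S : Finset G) : Set X := ⋃ s ∈ S, s • V

/-- A castle: a family of towers whose spans `Sᵢ Vᵢ` are pairwise disjoint. -/
def IsCastle {I : Type} (V : I → Set X) (S : I → Finset G) : Prop :=
  (∀ i, IsTower G X (V i) (S i)) ∧
  ∀ i j : I, i ≠ j →
    Disjoint (towerSpan G X (V i) (S i)) (towerSpan G X (V j) (S j))

/-- The collection of towers `{(Vᵢ, Sᵢ)}` covers `X`. -/
def TowersCover {I : Type} (V : I → Set X) (S : I → Finset G) : Prop :=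
  (⋃ i, towerSpan G X (V i) (S i)) = Set.univ

/-- The collection of towers `{(Vᵢ, Sᵢ)}` is `E`-Lebesgue. -/
def IsLebesgueTowers {I : Type} (E : Finset G) (V : I → Set X) (S : I → Finset G) : Prop :=
  ∀ x : X, ∃ i : I, ∃ t ∈ S i, x ∈ t • V i ∧ ∀ e ∈ E, e * t ∈ S i

/-- The family `{Sᵢ Vᵢ}` has chromatic number at most `d`. -/
def ChromaticLE {I : Type} (V : I → Set X) (S : I → Finset G) (d : ℕ) : Prop :=
  ∃ col : I → Fin d, ∀ i j : I, i ≠ j → col i = col j →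
    Disjoint (towerSpan G X (V i) (S i)) (towerSpan G X (V j) (S j))

/-- `towdim(X, G) ≤ d`. -/
def TowDimLE (d : ℕ) : Prop :=
  ∀ E : Finset G, ∃ (I : Type) (V : I → Set X) (S : I → Finset G),
    (∀ i, IsOpen (V i)) ∧ (∀ i, IsTower G X (V i) (S i)) ∧
    TowersCover G X V S ∧ IsLebesgueTowers G X E V S ∧ ChromaticLE G X V S (d + 1)

/-- The tower dimension of the action, with value `⊤` if it is infinite. -/
noncomputable def towdim : ℕ∞ := sInf {n : ℕ∞ | ∃ d : ℕ, n = (d : ℕ∞) ∧ TowDimLE G X d}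

/-- A Borel measure on `X` is invariant under the `G`-action. -/
def InvariantMeasure [MeasurableSpace X] (μ : Measure X) : Prop :=
  ∀ g : G, Measure.map (fun x : X => g • x) μ = μ

/-- The action has `m`-comparison. -/
def HasComparisonM [MeasurableSpace X] (m : ℕ) : Prop :=
  ∀ A B : Set X, IsOpen A → IsOpen B → A.Nonempty → B.Nonempty →
    (∀ μ : Measure X, IsProbabilityMeasure μ → InvariantMeasure G X μ → μ A < μ B) →
    SubEquivM G X m A B

/-- `μ` is an ergodic `G`-invariant Borel probability measure, i.e. an extreme point of the
convex set of invariant Borel probability measures. -/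
def IsErgodicInvariant [MeasurableSpace X] (μ : Measure X) : Prop :=
  IsProbabilityMeasure μ ∧ InvariantMeasure G X μ ∧
  ∀ (μ₁ μ₂ : Measure X) (t : ℝ≥0∞),
    IsProbabilityMeasure μ₁ → InvariantMeasure G X μ₁ →
    IsProbabilityMeasure μ₂ → InvariantMeasure G X μ₂ →
    0 < t → t < 1 → μ = t • μ₁ + (1 - t) • μ₂ → μ₁ = μ ∧ μ₂ = μ

end Basic

section Cov

variable (X : Type) [TopologicalSpace X]

/-- The Lebesgue covering dimension of `X` is at most `d`. -/
def CovDimLE (d : ℕ) : Prop :=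
  ∀ U : Finset (Set X), (∀ u ∈ U, IsOpen u) → (⋃ u ∈ U, u) = Set.univ →
    ∃ V : Finset (Set X), (∀ v ∈ V, IsOpen v) ∧ ((⋃ v ∈ V, v) = Set.univ) ∧
      (∀ v ∈ V, ∃ u ∈ U, v ⊆ u) ∧
      ∀ x : X, ({v : Set X | v ∈ V ∧ x ∈ v}).ncard ≤ d + 1

/-- The Lebesgue covering dimension of `X`, with value `⊤` if it is infinite. -/
noncomputable def covdim : ℕ∞ := sInf {n : ℕ∞ | ∃ d : ℕ, n = (d : ℕ∞) ∧ CovDimLE X d}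

end Cov

section Folner

variable (G : Type) [Group G]

/-- `S` is a nonempty `(K, δ)`-invariant finite subset of `G`. -/
def FolnerInv [DecidableEq G] (K : Finset G) (δ : ℝ) (S : Finset G) : Prop :=
  S.Nonempty ∧ ∀ s ∈ K, ((symmDiff (s • S) S).card : ℝ) < δ * (S.card : ℝ)

/-- `G` is amenable: it satisfies the Følner condition. -/
def AmenableFolner [DecidableEq G] : Prop :=
  ∀ (K : Finset G) (δ : ℝ), 0 < δ → ∃ S : Finset G, FolnerInv G K δ S

/-- The asymptotic dimension of `G` is at most `d`. -/
def AsDimLE (d : ℕ) : Prop :=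
  ∀ E : Finset G, ∃ (𝒰 : Set (Set G)) (F : Finset G),
    (∀ g : G, {u : Set G | u ∈ 𝒰 ∧ g ∈ u}.Finite ∧
      {u : Set G | u ∈ 𝒰 ∧ g ∈ u}.ncard ≤ d + 1) ∧
    (∀ u ∈ 𝒰, ∃ t : G, u ⊆ (fun f : G => f * t) '' (F : Set G)) ∧
    (∀ t : G, ∃ u ∈ 𝒰, (fun e : G => e * t) '' (E : Set G) ⊆ u)

/-- The asymptotic dimension of `G`, with value `⊤` if it is infinite. -/
noncomputable def asdim : ℕ∞ := sInf {n : ℕ∞ | ∃ d : ℕ, n = (d : ℕ∞) ∧ AsDimLE G d}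

end Folner

section AmDimDad

variable (G : Type) [Group G] (X : Type) [TopologicalSpace X] [MulAction G X]

/-- The amenability dimension of the action is at most `d`: for every finite `F ⊆ G` and
`ε > 0` there is a continuous map `φ : X → Δ_d(G) ⊆ ℓ¹(G)` which is `(F, ε)`-approximately
equivariant. -/
def AmDimLE (d : ℕ) : Prop :=
  ∀ (F : Finset G) (ε : ℝ), 0 < ε →
    ∃ φ : X → lp (fun _ : G => ℝ) 1,
      Continuous φ ∧
      (∀ (x : X) (t : G), 0 ≤ (φ x : ∀ _ : G, ℝ) t) ∧
      (∀ x : X, (∑' t : G, (φ x : ∀ _ : G, ℝ) t) = 1) ∧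
      (∀ x : X, (Function.support (φ x : ∀ _ : G, ℝ)).Finite ∧
        (Function.support (φ x : ∀ _ : G, ℝ)).ncard ≤ d + 1) ∧
      ∀ s ∈ F, ∀ x : X,
        (∑' t : G, |(φ (s • x) : ∀ _ : G, ℝ) t - (φ x : ∀ _ : G, ℝ) (s⁻¹ * t)|) < ε

/-- The amenability dimension, with value `⊤` if it is infinite. -/
noncomputable def amdim : ℕ∞ := sInf {n : ℕ∞ | ∃ d : ℕ, n = (d : ℕ∞) ∧ AmDimLE G X d}

/-- The dynamic asymptotic dimension of the action is at most `d`. -/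
def DadLE (d : ℕ) : Prop :=
  ∀ E : Finset G, ∃ (F : Finset G) (U : Finset (Set X)),
    (∀ u ∈ U, IsOpen u) ∧ U.card = d + 1 ∧ ((⋃ u ∈ U, u) = Set.univ) ∧
    ∀ u ∈ U, ∀ x ∈ u, ∀ l : List G, (∀ s ∈ l, s ∈ E) →
      (∀ k ≤ l.length, (l.take k).foldl (fun (y : X) (s : G) => s • y) x ∈ u) →
      (l.foldl (fun (g : G) (s : G) => s * g) 1) ∈ F

/-- The dynamic asymptotic dimension, with value `⊤` if it is infinite. -/
noncomputable def daddim : ℕ∞ := sInf {n : ℕ∞ | ∃ d : ℕ, n = (d : ℕ∞) ∧ DadLE G X d}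

end AmDimDad

section MetricDefs

variable (G : Type) [Group G] (X : Type) [MetricSpace X] [MulAction G X]

/-- The fine tower dimension of the action is at most `d`. -/
def FTowDimLE (d : ℕ) : Prop :=
  ∀ (E : Finset G) (δ : ℝ), 0 < δ →
    ∃ (I : Type) (V : I → Set X) (S : I → Finset G),
      (∀ i, IsOpen (V i)) ∧ (∀ i, IsTower G X (V i) (S i)) ∧
      TowersCover G X V S ∧ IsLebesgueTowers G X E V S ∧
      (∀ i, ∀ s ∈ S i, Metric.diam (s • V i) < δ) ∧
      ChromaticLE G X V S (d + 1)

/-- The fine tower dimension, with value `⊤` if it is infinite. -/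
noncomputable def ftowdim : ℕ∞ := sInf {n : ℕ∞ | ∃ d : ℕ, n = (d : ℕ∞) ∧ FTowDimLE G X d}

variable [DecidableEq G]

/-- The action is almost finite. -/
def AlmostFinite : Prop :=
  ∀ (n : ℕ) (K : Finset G) (δ : ℝ), 0 < n → 0 < δ →
    ∃ (I : Type) (_ : Fintype I) (V : I → Set X) (S S' : I → Finset G),
      (∀ i, IsOpen (V i)) ∧ IsCastle G X V S ∧
      (∀ i, FolnerInv G K δ (S i)) ∧
      (∀ i, ∀ s ∈ S i, Metric.diam (s • V i) < δ) ∧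
      (∀ i, S' i ⊆ S i) ∧
      (∀ i, ((S' i).card : ℝ) < ((S i).card : ℝ) / (n : ℝ)) ∧
      SubEquivM G X 0 (Set.univ \ ⋃ i, towerSpan G X (V i) (S i))
        (⋃ i, towerSpan G X (V i) (S' i))

/-- The action is `m`-almost finite. -/
def MAlmostFinite (m : ℕ) : Prop :=
  ∀ (n : ℕ) (K : Finset G) (δ : ℝ), 0 < n → 0 < δ →
    ∃ (I : Type) (V : I → Set X) (S S' : I → Finset G),
      (∀ i, IsOpen (V i)) ∧ (∀ i, IsTower G X (V i) (S i)) ∧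
      (∀ i, FolnerInv G K δ (S i)) ∧
      (∀ i, ∀ s ∈ S i, Metric.diam (s • V i) < δ) ∧
      ChromaticLE G X V S (m + 1) ∧
      (∀ i, S' i ⊆ S i) ∧
      (∀ i, ((S' i).card : ℝ) < ((S i).card : ℝ) / (n : ℝ)) ∧
      SubEquivM G X 0 (Set.univ \ ⋃ i, towerSpan G X (V i) (S i))
        (⋃ i, towerSpan G X (V i) (S' i))

/-- The action is coarsely almost finite. -/
def CoarselyAlmostFinite : Prop :=
  ∀ (n : ℕ) (K : Finset G) (δ : ℝ), 0 < n → 0 < δ →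
    ∃ (I : Type) (_ : Fintype I) (V : I → Set X) (S S' : I → Finset G),
      (∀ i, IsOpen (V i)) ∧ (∀ i, IsTower G X (V i) (S i)) ∧
      IsCastle G X (fun i => closure (V i)) S ∧
      (∀ i, FolnerInv G K δ (S i)) ∧
      (∀ i, S' i ⊆ S i) ∧
      (∀ i, ((S' i).card : ℝ) < ((S i).card : ℝ) / (n : ℝ)) ∧
      SubEquivM G X 0 (Set.univ \ ⋃ i, towerSpan G X (V i) (S i))
        (⋃ i, towerSpan G X (V i) (S' i))

end MetricDefs

section TypeSemigroup

variable (G : Type) [Group G] (X : Type) [TopologicalSpace X] [MulAction G X]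

/-- The elementary relation of dynamical equidecomposability on `C(X, ℤ≥0)`:
`f ∼ g` if `f = Σ hₖ` and `g = Σ α_{sₖ}(hₖ)` for continuous `hₖ : X → ℕ` and `sₖ ∈ G`. -/
def TypeRel (f g : X → ℕ) : Prop :=
  ∃ (n : ℕ) (h : Fin n → X → ℕ) (s : Fin n → G),
    (∀ k, Continuous (h k)) ∧
    (∀ x : X, (∑ k, h k x) = f x) ∧
    (∀ x : X, (∑ k, h k ((s k)⁻¹ • x)) = g x)

/-- The equivalence relation defining the clopen type semigroup `S(X, G)`. -/
def TypeEquiv : (X → ℕ) → (X → ℕ) → Prop := Relation.EqvGen (TypeRel G X)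

/-- The algebraic order on the type semigroup: `[f] ≤ [g]` iff `[f] + [h] = [g]` for some `h`. -/
def TypeLE (f g : X → ℕ) : Prop :=
  ∃ h : X → ℕ, Continuous h ∧ TypeEquiv G X (fun x => f x + h x) g

/-- The type semigroup `S(X, G)` is almost unperforated. -/
def TypeAlmostUnperforated : Prop :=
  ∀ f g : X → ℕ, Continuous f → Continuous g →
    ∀ n : ℕ, TypeLE G X (fun x => (n + 1) * f x) (fun x => n * g x) → TypeLE G X f g

end TypeSemigroup

end Kerr

namespace Kerr

set_option linter.unusedSectionVars false
set_option maxHeartbeats 400000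


section Helpers

variable {G X : Type} [Group G] [TopologicalSpace X] [MulAction G X] [ContinuousConstSMul G X]

lemma smul_disj (g : G) {A B : Set X} (h : Disjoint A B) : Disjoint (g • A) (g • B) := by
  rw [Set.disjoint_iff_inter_eq_empty] at h ⊢
  rw [← Set.smul_set_inter, h, Set.smul_set_empty]

lemma clopen_smul (g : G) {A : Set X} (h : IsClopen A) : IsClopen (g • A) :=
  ⟨h.1.smul g, h.2.smul g⟩

variable [CompactSpace X]

/-- disjointification + clopen shrinking of an open cover of a compact clopen set. -/
lemma clopen_partition {ι : Type} (hzd : ZeroDimensional X) (C : Set X) (hC : IsClopen C)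
    (t : Finset ι) (U : ι → Set X) (hop : ∀ i ∈ t, IsOpen (U i))
    (hcov : C ⊆ ⋃ i ∈ t, U i) :
    ∃ (N : ℕ) (B : Fin N → Set X) (f : Fin N → ι),
      (∀ k, IsClopen (B k)) ∧ (∀ k, f k ∈ t) ∧ (∀ k, B k ⊆ U (f k)) ∧ (∀ k, B k ⊆ C) ∧
      (∀ k l, k ≠ l → Disjoint (B k) (B l)) ∧ (⋃ k, B k) = C := by
  classical
  rcases C.eq_empty_or_nonempty with hCe | hCne
  · exact ⟨0, Fin.elim0, Fin.elim0, fun k => k.elim0, fun k => k.elim0, fun k => k.elim0,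
      fun k => k.elim0, fun k => k.elim0, by simp [hCe]⟩
  obtain ⟨x₀, hx₀C⟩ := hCne
  have hchoice : ∀ x : X, ∃ (E : Set X) (i : ι), IsClopen E ∧ E ⊆ C ∧
      (x ∈ C → x ∈ E) ∧ i ∈ t ∧ E ⊆ U i := by
    intro x
    by_cases hx : x ∈ C
    · obtain ⟨i, hit, hxUi⟩ := by simpa using hcov hx
      obtain ⟨D, hD, hxD, hDU⟩ := hzd x (U i) (hop i hit) hxUi
      exact ⟨D ∩ C, i, hD.inter hC, Set.inter_subset_right,
        fun _ => ⟨hxD, hx⟩, hit, fun y hy => hDU hy.1⟩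
    · obtain ⟨i, hit, hxUi⟩ := by simpa using hcov hx₀C
      exact ⟨∅, i, isClopen_empty, by simp, fun h => absurd h hx, hit, by simp⟩
  choose E idx hEclopen hEC hxE hidx hEU using hchoice
  have hCcpt : IsCompact C := hC.isClosed.isCompact
  obtain ⟨s, hs⟩ := hCcpt.elim_finite_subcover E (fun x => (hEclopen x).2)
    (fun x hx => Set.mem_iUnion.2 ⟨x, hxE x hx⟩)
  set N := s.card with hN
  let e : Fin N → X := fun k => (s.equivFin.symm k : X)
  let B : Fin N → Set X := fun k => E (e k) \ ⋃ (l : Fin N) (_ : l < k), E (e l)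
  have hBsub : ∀ k, B k ⊆ E (e k) := fun k => Set.diff_subset
  refine ⟨N, B, fun k => idx (e k), ?_, fun k => hidx _, fun k => (hBsub k).trans (hEU _),
    fun k => (hBsub k).trans (hEC _), ?_, ?_⟩
  · intro k
    refine (hEclopen (e k)).diff ?_
    have : IsClopen (⋃ l ∈ Finset.univ.filter (fun l : Fin N => l < k), E (e l)) :=
      isClopen_biUnion_finset (fun l _ => hEclopen (e l))
    convert this using 2
    ext l
    simp
  · intro k l hkl
    rcases Ne.lt_or_gt hkl with h | h
    · rw [Set.disjoint_right]
      intro x hxl hxk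
      exact hxl.2 (Set.mem_iUnion.2 ⟨k, Set.mem_iUnion.2 ⟨h, hBsub k hxk⟩⟩)
    · rw [Set.disjoint_left]
      intro x hxk hxl
      exact hxk.2 (Set.mem_iUnion.2 ⟨l, Set.mem_iUnion.2 ⟨h, hBsub l hxl⟩⟩)
  · apply Set.Subset.antisymm
    · exact Set.iUnion_subset fun k => (hBsub k).trans (hEC _)
    · intro x hx
      have hxcov : x ∈ ⋃ (k : Fin N), E (e k) := by
        obtain ⟨y, hyt, hyE⟩ := by simpa using hs hx
        refine Set.mem_iUnion.2 ⟨s.equivFin ⟨y, hyt⟩, ?_⟩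
        simpa [e] using hyE
      obtain ⟨k₀, hk₀⟩ := Set.mem_iUnion.1 hxcov
      have hne : (Finset.univ.filter (fun k : Fin N => x ∈ E (e k))).Nonempty :=
        ⟨k₀, by simp [hk₀]⟩
      set m := (Finset.univ.filter (fun k : Fin N => x ∈ E (e k))).min' hne with hm
      have hmmem : x ∈ E (e m) := by
        have := (Finset.univ.filter (fun k : Fin N => x ∈ E (e k))).min'_mem hne
        simpa using this
      refine Set.mem_iUnion.2 ⟨m, hmmem, ?_⟩
      intro hxbad
      obtain ⟨l, hl⟩ := Set.mem_iUnion.1 hxbad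
      obtain ⟨hlm, hxl⟩ := Set.mem_iUnion.1 hl
      have : m ≤ l := Finset.min'_le _ _ (by simp [hxl])
      exact absurd hlm (not_lt.2 this)

lemma clopen_inter_piece {ι : Type} (A : Set X) (hA : IsClopen A) (O : ι → Set X)
    (hO : ∀ i, IsOpen (O i)) (hd : ∀ i j, i ≠ j → Disjoint (O i) (O j))
    (hcov : A ⊆ ⋃ i, O i) (i : ι) : IsClopen (A ∩ O i) := by
  classical
  refine ⟨?_, hA.2.inter (hO i)⟩
  have : A ∩ O i = A ∩ (⋃ (j : ι) (_ : j ≠ i), O j)ᶜ := by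
    ext x
    constructor
    · rintro ⟨hxA, hxO⟩
      refine ⟨hxA, ?_⟩
      intro hx
      obtain ⟨j, hj⟩ := Set.mem_iUnion.1 hx
      obtain ⟨hji, hxj⟩ := Set.mem_iUnion.1 hj
      exact (hd j i hji).le_bot ⟨hxj, hxO⟩
    · rintro ⟨hxA, hx⟩
      obtain ⟨j, hxj⟩ := Set.mem_iUnion.1 (hcov hxA)
      rcases eq_or_ne j i with rfl | hji
      · exact ⟨hxA, hxj⟩
      · exact absurd (Set.mem_iUnion.2 ⟨j, Set.mem_iUnion.2 ⟨hji, hxj⟩⟩) hx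
  rw [this]
  exact hA.1.inter (isClosed_compl_iff.2 (isOpen_iUnion fun j => isOpen_iUnion fun _ => hO j))

end Helpers


section Backward

variable {G X : Type} [Group G] [DecidableEq G] [MetricSpace X] [CompactSpace X]
  [MulAction G X] [ContinuousConstSMul G X]

lemma backward_direction (hzd : ZeroDimensional X)
    (h : ∀ (K : Finset G) (δ : ℝ), 0 < δ →
      ∃ (I : Type) (_ : Fintype I) (V : I → Set X) (S : I → Finset G),
        (∀ i, IsClopen (V i)) ∧ IsCastle G X V S ∧
        (∀ i, FolnerInv G K δ (S i)) ∧
        (⋃ i, towerSpan G X (V i) (S i)) = Set.univ) :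
    AlmostFinite G X := by
  classical
  intro n K δ hn hδ
  obtain ⟨J, hJ, V, S, hVc, hcastle, hfol, hcover⟩ := h K δ hδ
  -- refine each base into clopen pieces with small levels
  have key : ∀ (j : J) (x : X), ∃ Nx : Set X, IsClopen Nx ∧ (x ∈ V j → x ∈ Nx) ∧
      Nx ⊆ V j ∧ ∀ s ∈ S j, Metric.diam ((s : G) • Nx) < δ := by
    intro j x
    by_cases hx : x ∈ V j
    · set O : Set X := V j ∩ ⋂ s ∈ S j, (fun y : X => s • y) ⁻¹' Metric.ball (s • x) (δ/4)
        with hO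
      have hOopen : IsOpen O := by
        refine (hVc j).2.inter ?_
        refine isOpen_biInter_finset (fun s _ => ?_)
        exact (Metric.isOpen_ball).preimage (continuous_const_smul s)
      have hxO : x ∈ O := by
        refine ⟨hx, ?_⟩
        simp only [Set.mem_iInter, Set.mem_preimage]
        intro s _
        exact Metric.mem_ball_self (by linarith)
      obtain ⟨Nx, hNc, hxN, hNO⟩ := hzd x O hOopen hxO
      refine ⟨Nx, hNc, fun _ => hxN, fun y hy => (hNO hy).1, ?_⟩
      intro s hs
      have hsub : s • Nx ⊆ Metric.ball (s • x) (δ/4) := by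
        rintro _ ⟨y, hy, rfl⟩
        have := ((hNO hy).2 : y ∈ ⋂ s ∈ S j, (fun y : X => s • y) ⁻¹' Metric.ball (s • x) (δ/4))
        simp only [Set.mem_iInter, Set.mem_preimage] at this
        exact this s hs
      calc Metric.diam (s • Nx) ≤ Metric.diam (Metric.ball (s • x) (δ/4)) :=
            Metric.diam_mono hsub Metric.isBounded_ball
        _ ≤ 2 * (δ/4) := Metric.diam_ball (by linarith)
        _ < δ := by linarith
    · exact ⟨∅, isClopen_empty, fun hx' => absurd hx' hx, by simp, fun s _ => by
        rw [Set.smul_set_empty, Metric.diam_empty]; exact hδ⟩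
  choose NB hNBc hNBx hNBV hNBd using key
  -- partition each V j into the pieces
  have part : ∀ j : J, ∃ (N : ℕ) (B : Fin N → Set X),
      (∀ k, IsClopen (B k)) ∧ (∀ k, B k ⊆ V j) ∧
      (∀ k, ∀ s ∈ S j, Metric.diam ((s : G) • B k) < δ) ∧
      (∀ k l, k ≠ l → Disjoint (B k) (B l)) ∧ (⋃ k, B k) = V j := by
    intro j
    have hVcpt : IsCompact (V j) := (hVc j).1.isCompact
    obtain ⟨t, ht⟩ := hVcpt.elim_finite_subcover (fun x : X => NB j x)
      (fun x => (hNBc j x).2) (fun x hx => Set.mem_iUnion.2 ⟨x, hNBx j x hx⟩)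
    have ht' : V j ⊆ ⋃ x ∈ t, NB j x := ht
    obtain ⟨N, B, f, hBc, _, hBsubU, hBsubC, hBdisj, hBunion⟩ :=
      clopen_partition hzd (V j) (hVc j) t (fun x => NB j x)
        (fun x _ => (hNBc j x).2) ht'
    refine ⟨N, B, hBc, hBsubC, ?_, hBdisj, hBunion⟩
    intro k s hs
    have hb : Bornology.IsBounded ((s : G) • NB j (f k)) :=
      ((isCompact_univ : IsCompact (Set.univ : Set X)).isBounded).subset (Set.subset_univ _)
    calc Metric.diam ((s : G) • B k) ≤ Metric.diam ((s : G) • NB j (f k)) :=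
          Metric.diam_mono (Set.smul_set_mono (hBsubU k)) hb
      _ < δ := hNBd j (f k) s hs
  choose NN BB hBBc hBBV hBBd hBBdisj hBBunion using part
  -- final castle
  refine ⟨(Σ j : J, Fin (NN j)), Sigma.instFintype, fun p => BB p.1 p.2, fun p => S p.1,
    fun _ => ∅, fun p => (hBBc p.1 p.2).2, ?_, fun p => hfol p.1, fun p => hBBd p.1 p.2, ?_, ?_, ?_⟩
  · constructor
    · rintro ⟨j, k⟩ s hs t ht hst
      exact Set.disjoint_of_subset (Set.smul_set_mono (hBBV j k)) (Set.smul_set_mono (hBBV j k))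
        (hcastle.1 j s hs t ht hst)
    · rintro ⟨j, k⟩ ⟨j', k'⟩ hne
      rcases eq_or_ne j j' with rfl | hjj
      · have hkk : k ≠ k' := by
          intro hh; exact hne (by simp [hh])
        simp only [towerSpan, Set.disjoint_iUnion_left, Set.disjoint_iUnion_right]
        intro s hs s' hs'
        rcases eq_or_ne s s' with rfl | hss
        · exact smul_disj s (hBBdisj j k k' hkk)
        · exact Set.disjoint_of_subset (Set.smul_set_mono (hBBV j k))
            (Set.smul_set_mono (hBBV j k')) (hcastle.1 j s' hs' s hs (Ne.symm hss))
      · refine Set.disjoint_of_subset ?_ ?_ (hcastle.2 j j' hjj)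
        · exact Set.iUnion₂_mono fun s _ => Set.smul_set_mono (hBBV j k)
        · exact Set.iUnion₂_mono fun s _ => Set.smul_set_mono (hBBV j' k')
  · rintro ⟨j, k⟩; exact Finset.empty_subset _
  · rintro ⟨j, k⟩
    simp only [Finset.card_empty, Nat.cast_zero]
    have hSpos : 0 < ((S j).card : ℝ) := by
      have := (hfol j).1
      exact_mod_cast Finset.card_pos.2 this
    positivity
  · -- remainder is empty
    have hcov2 : (⋃ p : (Σ j : J, Fin (NN j)), towerSpan G X (BB p.1 p.2) (S p.1)) = Set.univ := by
      apply Set.eq_univ_of_univ_subset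
      rw [← hcover]
      rintro x hx
      obtain ⟨j, hj⟩ := Set.mem_iUnion.1 hx
      obtain ⟨s, hsS, hxs⟩ := by simpa [towerSpan] using hj
      obtain ⟨y, hyV, rfl⟩ := hxs
      rw [← hBBunion j] at hyV
      obtain ⟨k, hk⟩ := Set.mem_iUnion.1 hyV
      exact Set.mem_iUnion.2 ⟨⟨j, k⟩, Set.mem_biUnion hsS ⟨y, hk, rfl⟩⟩
    intro C hCcl hCA
    refine ⟨∅, fun _ => 1, fun _ => 0, by simp, ?_, by simp, by simp⟩
    have : C ⊆ ∅ := by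
      intro x hx
      have := hCA hx
      rw [hcov2] at this
      exact absurd (Set.mem_univ x) this.2
    intro x hx
    exact absurd (this hx) (Set.notMem_empty x)

end Backward

section Forward

variable {G X : Type} [Group G] [DecidableEq G] [MetricSpace X] [CompactSpace X]
  [MulAction G X] [ContinuousConstSMul G X]

lemma folner_arith {δ nr a b r c c' t : ℝ} (hδ : 0 < δ) (hnpos : 0 < nr) (hn4 : 4 ≤ nr * δ)
    (h0r : 0 ≤ r) (h1 : a ≤ b + 2 * r) (h2 : b < δ / 2 * c) (h3 : r ≤ c') (h4 : c' < c / nr)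
    (h6 : c ≤ t) : a < δ * t := by
  have hcn : 0 ≤ c / nr := le_trans h0r (le_trans h3 h4.le)
  have hmul := mul_le_mul_of_nonneg_left hn4 hcn
  have heq : c / nr * (nr * δ) = δ * c := by
    field_simp
  have hc : 2 * (c / nr) ≤ δ / 2 * c := by linarith
  have ha : a < δ * c := by linarith
  have hδt : δ * c ≤ δ * t := mul_le_mul_of_nonneg_left h6 hδ.le
  linarith

lemma forward_direction (hzd : ZeroDimensional X) (haf : AlmostFinite G X)
    (K : Finset G) (δ : ℝ) (hδ : 0 < δ) :
    ∃ (I : Type) (_ : Fintype I) (V : I → Set X) (S : I → Finset G),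
      (∀ i, IsClopen (V i)) ∧ IsCastle G X V S ∧
      (∀ i, FolnerInv G K δ (S i)) ∧
      (⋃ i, towerSpan G X (V i) (S i)) = Set.univ := by
  classical
  set n : ℕ := ⌈(4:ℝ)/δ⌉₊ + 1 with hn_def
  have hn : 0 < n := Nat.succ_pos _
  have hnδ : (4:ℝ)/δ ≤ n := by
    calc (4:ℝ)/δ ≤ ⌈(4:ℝ)/δ⌉₊ := Nat.le_ceil _
      _ ≤ n := by exact_mod_cast Nat.le_succ _
  obtain ⟨J, hJ, V, S, S', hVopen, hcastle, hfol, hdiam, hS'sub, hS'card, hsub⟩ :=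
    haf n K (δ/2) hn (by linarith)
  -- the open union of spans and the closed remainder
  set Ωv : Set X := ⋃ j, towerSpan G X (V j) (S j) with hΩv_def
  have hΩvopen : IsOpen Ωv :=
    isOpen_iUnion fun j => isOpen_biUnion fun s _ => (hVopen j).smul s
  have hAclosed : IsClosed (Set.univ \ Ωv) := by
    rw [← Set.compl_eq_univ_diff]; exact isClosed_compl_iff.2 hΩvopen
  obtain ⟨𝒰, sfun, col, h𝒰open, hCcov, htarget, hdisj𝒰₀⟩ :=
    hsub (Set.univ \ Ωv) hAclosed (subset_refl _)
  have hdisj𝒰 : ∀ u ∈ 𝒰, ∀ v ∈ 𝒰, u ≠ v → Disjoint (sfun u • u) (sfun v • v) :=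
    fun u hu v hv huv => hdisj𝒰₀ u hu v hv huv (by omega)
  -- F : the part of X not covered by 𝒰; it sits inside the old spans
  set F : Set X := Set.univ \ ⋃ u ∈ 𝒰, u with hF_def
  have hFclosed : IsClosed F := by
    rw [hF_def, ← Set.compl_eq_univ_diff]
    exact isClosed_compl_iff.2 (isOpen_biUnion fun u hu => h𝒰open u hu)
  have hFsub : F ⊆ Ωv := by
    intro x hx
    by_contra hxΩ
    exact hx.2 (hCcov ⟨Set.mem_univ x, hxΩ⟩)
  -- choose clopen sets inside levels covering F
  have hchoice : ∀ x : F, ∃ (E : Set X) (j : J) (s : G), IsClopen E ∧ (x : X) ∈ E ∧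
      s ∈ S j ∧ E ⊆ s • V j := by
    rintro ⟨x, hx⟩
    obtain ⟨j, hj⟩ := Set.mem_iUnion.1 (hFsub hx)
    obtain ⟨s, hsS, hxs⟩ := by simpa [towerSpan] using hj
    obtain ⟨E, hEc, hxE, hEsub⟩ := hzd x (s • V j) ((hVopen j).smul s) hxs
    exact ⟨E, j, s, hEc, hxE, hsS, hEsub⟩
  choose E jdx sdx hEc hxE hsdx hEsub using hchoice
  have hFcpt : IsCompact F := hFclosed.isCompact
  obtain ⟨tF, htF⟩ := hFcpt.elim_finite_subcover (fun x : F => E x)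
    (fun x => (hEc x).2) (fun x hx => Set.mem_iUnion.2 ⟨⟨x, hx⟩, hxE ⟨x, hx⟩⟩)
  -- stage-0 clopen bases
  set D : J → F → Set X := fun j x => if jdx x = j then (sdx x)⁻¹ • E x else ∅ with hD_def
  have hDc : ∀ j x, IsClopen (D j x) := by
    intro j x
    by_cases h : jdx x = j <;> simp [hD_def, h, isClopen_empty, clopen_smul _ (hEc x)]
  have hDV : ∀ j x, D j x ⊆ V j := by
    intro j x
    by_cases h : jdx x = j
    · simp only [hD_def, if_pos h]
      subst h
      intro y hy
      have h2 := Set.smul_set_mono (hEsub x) hy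
      rwa [inv_smul_smul] at h2
    · simp [hD_def, if_neg h]
  set Vb0 : J → Set X := fun j => ⋃ x ∈ tF, D j x with hVb0_def
  have hVb0c : ∀ j, IsClopen (Vb0 j) := fun j => isClopen_biUnion_finset (fun x _ => hDc j x)
  have hVb0V : ∀ j, Vb0 j ⊆ V j := fun j => Set.iUnion₂_subset fun x _ => hDV j x
  set Ω0 : Set X := ⋃ j, towerSpan G X (Vb0 j) (S j) with hΩ0_def
  have hΩ0c : IsClopen Ω0 :=
    isClopen_iUnion_of_finite fun j => isClopen_biUnion_finset fun s _ =>
      clopen_smul s (hVb0c j)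
  have hFΩ0 : F ⊆ Ω0 := by
    intro x hx
    obtain ⟨y, hyt, hyE⟩ := Set.mem_iUnion₂.1 (htF hx)
    refine Set.mem_iUnion.2 ⟨jdx y, Set.mem_biUnion (hsdx y) ?_⟩
    refine ⟨(sdx y)⁻¹ • x, ?_, smul_inv_smul _ _⟩
    refine Set.mem_biUnion hyt ?_
    simp only [hD_def, if_pos rfl]
    exact ⟨x, hyE, rfl⟩
  -- C0 : clopen complement of the stage-0 spans, covered by 𝒰
  set C0 : Set X := Set.univ \ Ω0 with hC0_def
  have hC0c : IsClopen C0 := by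
    rw [hC0_def, ← Set.compl_eq_univ_diff]; exact hΩ0c.compl
  have hC0cov : C0 ⊆ ⋃ u ∈ 𝒰, u := by
    intro x hx
    by_contra hxu
    exact hx.2 (hFΩ0 ⟨Set.mem_univ x, hxu⟩)
  obtain ⟨N, B, f, hBc, hf𝒰, hBf, hBC0, hBdisj, hBunion⟩ :=
    clopen_partition hzd C0 hC0c 𝒰 id (fun u hu => h𝒰open u hu) hC0cov
  set sk : Fin N → G := fun k => sfun (f k) with hsk_def
  have hBdisj2 : ∀ k l, k ≠ l → Disjoint (sk k • B k) (sk l • B l) := by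
    intro k l hkl
    rcases eq_or_ne (f k) (f l) with hfe | hfne
    · have h1 : Disjoint (sk k • B k) (sk k • B l) := smul_disj (sk k) (hBdisj k l hkl)
      have h2 : sk k = sk l := by rw [hsk_def]; simp only []; rw [hfe]
      nth_rewrite 2 [h2] at h1
      exact h1
    · exact Set.disjoint_of_subset (Set.smul_set_mono (hBf k)) (Set.smul_set_mono (hBf l))
        (hdisj𝒰 (f k) (hf𝒰 k) (f l) (hf𝒰 l) hfne)
  have htargetk : ∀ k, sk k • B k ⊆ ⋃ i, towerSpan G X (V i) (S' i) :=
    fun k => (Set.smul_set_mono (hBf k)).trans (htarget (f k) (hf𝒰 k))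
  -- the pairwise disjoint family of target levels
  set ι₂ : Type := Σ j : J, {t : G // t ∈ S' j} with hι₂_def
  set O : ι₂ → Set X := fun p => (p.2 : G) • V p.1 with hO_def
  have hOopen : ∀ p, IsOpen (O p) := fun p => (hVopen p.1).smul _
  have hOdisj : ∀ p q : ι₂, p ≠ q → Disjoint (O p) (O q) := by
    rintro ⟨j, t, ht⟩ ⟨j', t', ht'⟩ hpq
    rcases eq_or_ne j j' with rfl | hjj
    · have htt : t ≠ t' := by
        intro h; subst h; exact hpq rfl
      exact hcastle.1 j t (hS'sub j ht) t' (hS'sub j ht') htt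
    · refine Set.disjoint_of_subset ?_ ?_ (hcastle.2 j j' hjj)
      · exact Set.subset_iUnion₂_of_subset t (hS'sub j ht) (subset_refl _)
      · exact Set.subset_iUnion₂_of_subset t' (hS'sub j' ht') (subset_refl _)
  have hcovO : ∀ k, sk k • B k ⊆ ⋃ p, O p := by
    intro k x hx
    obtain ⟨j, hj⟩ := Set.mem_iUnion.1 (htargetk k hx)
    obtain ⟨t, htS, hxt⟩ := Set.mem_iUnion₂.1 hj
    exact Set.mem_iUnion.2 ⟨⟨j, t, htS⟩, hxt⟩
  -- full pieces, used to enlarge the stage-0 bases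
  set W0 : ι₂ → Fin N → Set X := fun p k => (p.2 : G)⁻¹ • ((sk k • B k) ∩ O p) with hW0_def
  have hW0c : ∀ p k, IsClopen (W0 p k) :=
    fun p k => clopen_smul _ (clopen_inter_piece _ (clopen_smul _ (hBc k)) O hOopen hOdisj
      (hcovO k) p)
  -- enlarged clopen bases
  set Vb : J → Set X := fun j => Vb0 j ∪ ⋃ (k : Fin N), ⋃ (t : {t : G // t ∈ S' j}),
    W0 ⟨j, t⟩ k with hVb_def
  have hVbc : ∀ j, IsClopen (Vb j) := by
    intro j
    refine (hVb0c j).union ?_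
    exact isClopen_iUnion_of_finite fun k => isClopen_iUnion_of_finite fun t => hW0c ⟨j, t⟩ k
  have hW0V : ∀ (j : J) (t : {t : G // t ∈ S' j}) k, W0 ⟨j, t⟩ k ⊆ V j := by
    intro j t k y hy
    have h2 := Set.smul_set_mono (Set.inter_subset_right) hy
    rwa [hO_def, inv_smul_smul] at h2
  have hVbV : ∀ j, Vb j ⊆ V j := by
    intro j
    refine Set.union_subset (hVb0V j) ?_
    exact Set.iUnion_subset fun k => Set.iUnion_subset fun t => hW0V j t k
  -- the clopen span Ω and the exact remainder
  set Ω : Set X := ⋃ j, towerSpan G X (Vb j) (S j) with hΩ_def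
  have hΩc : IsClopen Ω :=
    isClopen_iUnion_of_finite fun j => isClopen_biUnion_finset fun s _ =>
      clopen_smul s (hVbc j)
  have hΩ0Ω : Ω0 ⊆ Ω := by
    refine Set.iUnion_mono fun j => Set.iUnion₂_mono fun s _ => Set.smul_set_mono ?_
    exact Set.subset_union_left
  set B' : Fin N → Set X := fun k => B k \ Ω with hB'_def
  have hB'c : ∀ k, IsClopen (B' k) := fun k => (hBc k).diff hΩc
  have hB'B : ∀ k, B' k ⊆ B k := fun k => Set.diff_subset
  have hB'Ω : ∀ k, B' k ⊆ Ωᶜ := fun k => fun x hx => hx.2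
  have hB'disj2 : ∀ k l, k ≠ l → Disjoint (sk k • B' k) (sk l • B' l) := fun k l hkl =>
    Set.disjoint_of_subset (Set.smul_set_mono (hB'B k)) (Set.smul_set_mono (hB'B l))
      (hBdisj2 k l hkl)
  have hcovO' : ∀ k, sk k • B' k ⊆ ⋃ p, O p :=
    fun k => (Set.smul_set_mono (hB'B k)).trans (hcovO k)
  -- final pieces
  set W : ι₂ → Fin N → Set X := fun p k => (p.2 : G)⁻¹ • ((sk k • B' k) ∩ O p) with hW_def
  have hWc : ∀ p k, IsClopen (W p k) :=
    fun p k => clopen_smul _ (clopen_inter_piece _ (clopen_smul _ (hB'c k)) O hOopen hOdisj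
      (hcovO' k) p)
  have hWW0 : ∀ p k, W p k ⊆ W0 p k := fun p k =>
    Set.smul_set_mono (Set.inter_subset_inter_left _ (Set.smul_set_mono (hB'B k)))
  have hWVb : ∀ (j : J) (t : {t : G // t ∈ S' j}) k, W ⟨j, t⟩ k ⊆ Vb j := by
    intro j t k
    refine (hWW0 ⟨j, t⟩ k).trans ?_
    refine Set.subset_union_of_subset_right ?_ _
    exact Set.subset_iUnion_of_subset k (Set.subset_iUnion_of_subset t (subset_refl _))
  -- atoms of the Boolean algebra generated by the pieces inside each base
  set Q : J → Type := fun j => Fin N × {t : G // t ∈ S' j} with hQ_def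
  set atom : (j : J) → (Q j → Bool) → Set X := fun j σ =>
    Vb j ∩ ⋂ q : Q j, (bif σ q then W ⟨j, q.2⟩ q.1 else (W ⟨j, q.2⟩ q.1)ᶜ) with hatom_def
  have hatomc : ∀ j σ, IsClopen (atom j σ) := by
    intro j σ
    refine (hVbc j).inter ⟨isClosed_iInter fun q => ?_, isOpen_iInter_of_finite fun q => ?_⟩
    · cases hq : σ q
      · simp only [cond_false]; exact (hWc ⟨j, q.2⟩ q.1).compl.1
      · simp only [cond_true]; exact (hWc ⟨j, q.2⟩ q.1).1
    · cases hq : σ q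
      · simp only [cond_false]; exact (hWc ⟨j, q.2⟩ q.1).compl.2
      · simp only [cond_true]; exact (hWc ⟨j, q.2⟩ q.1).2
  have hatomVb : ∀ j σ, atom j σ ⊆ Vb j := fun j σ => Set.inter_subset_left
  have hatom_subW : ∀ j σ (q : Q j), σ q = true → atom j σ ⊆ W ⟨j, q.2⟩ q.1 := by
    intro j σ q hq z hz
    have := Set.mem_iInter.1 hz.2 q
    rwa [hq, cond_true] at this
  have hatom_subWc : ∀ j σ (q : Q j), σ q = false → atom j σ ⊆ (W ⟨j, q.2⟩ q.1)ᶜ := by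
    intro j σ q hq z hz
    have := Set.mem_iInter.1 hz.2 q
    rwa [hq, cond_false] at this
  have hatom_disj : ∀ j (σ σ' : Q j → Bool), σ ≠ σ' → Disjoint (atom j σ) (atom j σ') := by
    intro j σ σ' hσσ
    obtain ⟨q, hq⟩ := Function.ne_iff.1 hσσ
    cases hσq : σ q
    · have hσ'q : σ' q = true := by
        cases h' : σ' q
        · exact absurd (hσq.trans h'.symm) hq
        · rfl
      exact Set.disjoint_of_subset (hatom_subWc j σ q hσq) (hatom_subW j σ' q hσ'q)
        disjoint_compl_left
    · have hσ'q : σ' q = false := by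
        cases h' : σ' q
        · rfl
        · exact absurd (hσq.trans h'.symm) hq
      exact Set.disjoint_of_subset (hatom_subW j σ q hσq) (hatom_subWc j σ' q hσ'q)
        disjoint_compl_right
  -- shapes
  set R : (j : J) → (Q j → Bool) → Finset G := fun j σ =>
    ((Finset.univ : Finset (Q j)).filter
      (fun q => (atom j σ).Nonempty ∧ atom j σ ⊆ W ⟨j, q.2⟩ q.1)).image
      (fun q => (sk q.1)⁻¹ * (q.2 : G)) with hR_def
  set T : (j : J) → (Q j → Bool) → Finset G := fun j σ => S j ∪ R j σ with hT_def
  -- the image of a piece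
  set piece : Fin N → ι₂ → Set X := fun k p => (sk k)⁻¹ • ((sk k • B' k) ∩ O p)
    with hpiece_def
  have hWpieceEq : ∀ (j : J) (t : {t : G // t ∈ S' j}) (k : Fin N),
      ((sk k)⁻¹ * (t : G)) • W ⟨j, t⟩ k = piece k ⟨j, t⟩ := by
    intro j t k
    rw [hW_def, hpiece_def]
    simp only []
    rw [smul_smul]
    congr 1
    group
  have hpieceB' : ∀ k p, piece k p ⊆ B' k := by
    intro k p
    rw [hpiece_def]
    intro y hy
    have h2 := Set.smul_set_mono (Set.inter_subset_left) hy
    rwa [inv_smul_smul] at h2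
  have hpiece_disj : ∀ (k k' : Fin N) (p p' : ι₂), k ≠ k' ∨ p ≠ p' →
      Disjoint (piece k p) (piece k' p') := by
    intro k k' p p' h
    rcases eq_or_ne k k' with rfl | hkk
    · rcases h with h | h
      · exact absurd rfl h
      · exact smul_disj ((sk k)⁻¹) (Set.disjoint_of_subset Set.inter_subset_right
          Set.inter_subset_right (hOdisj p p' h))
    · exact Set.disjoint_of_subset (hpieceB' k p) (hpieceB' k' p')
        (Set.disjoint_of_subset (hB'B k) (hB'B k') (hBdisj k k' hkk))
  -- description of levels coming from R
  have hlevelR : ∀ j σ g, g ∈ R j σ → (atom j σ).Nonempty ∧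
      ∃ (k : Fin N) (t : {t : G // t ∈ S' j}), g = (sk k)⁻¹ * (t : G) ∧
        atom j σ ⊆ W ⟨j, t⟩ k := by
    intro j σ g hg
    rw [hR_def] at hg
    obtain ⟨q, hq, rfl⟩ := Finset.mem_image.1 hg
    have hq2 := Finset.mem_filter.1 hq
    exact ⟨hq2.2.1, q.1, q.2, rfl, hq2.2.2⟩
  have hlevelRpiece : ∀ j σ g, g ∈ R j σ → ∃ (k : Fin N) (p : ι₂),
      g • atom j σ ⊆ piece k p := by
    intro j σ g hg
    obtain ⟨-, k, t, rfl, hsub'⟩ := hlevelR j σ g hg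
    exact ⟨k, ⟨j, t⟩, by rw [← hWpieceEq j t k]; exact Set.smul_set_mono hsub'⟩
  have hlevelSΩ : ∀ j σ g, g ∈ S j → g • atom j σ ⊆ Ω := by
    intro j σ g hg
    refine (Set.smul_set_mono (hatomVb j σ)).trans ?_
    exact Set.subset_iUnion_of_subset j (Set.subset_iUnion₂_of_subset g hg (subset_refl _))
  have hlevelRΩc : ∀ j σ g, g ∈ R j σ → g • atom j σ ⊆ Ωᶜ := by
    intro j σ g hg
    obtain ⟨k, p, hp⟩ := hlevelRpiece j σ g hg
    exact hp.trans ((hpieceB' k p).trans (hB'Ω k))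
  have hWdisj_k : ∀ (p : ι₂) (k k' : Fin N), k ≠ k' → Disjoint (W p k) (W p k') :=
    fun p k k' hkk => smul_disj _ (Set.disjoint_of_subset Set.inter_subset_left
      Set.inter_subset_left (hB'disj2 k k' hkk))
  -- master disjointness of all levels
  have hMD : ∀ (p p' : Σ j : J, (Q j → Bool)) (g g' : G), g ∈ T p.1 p.2 → g' ∈ T p'.1 p'.2 →
      (p ≠ p' ∨ g ≠ g') → Disjoint (g • atom p.1 p.2) (g' • atom p'.1 p'.2) := by
    rintro ⟨j, σ⟩ ⟨j', σ'⟩ g g' hg hg' hcond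
    rcases Finset.mem_union.1 hg with hgS | hgR
    · rcases Finset.mem_union.1 hg' with hg'S | hg'R
      · rcases eq_or_ne j j' with rfl | hjj
        · rcases eq_or_ne g g' with rfl | hgg
          · have hσσ : σ ≠ σ' := by
              intro h
              subst h
              rcases hcond with h | h
              · exact h rfl
              · exact h rfl
            exact smul_disj g (hatom_disj j σ σ' hσσ)
          · exact Set.disjoint_of_subset
              (Set.smul_set_mono ((hatomVb j σ).trans (hVbV j)))
              (Set.smul_set_mono ((hatomVb j σ').trans (hVbV j)))
              (hcastle.1 j g hgS g' hg'S hgg)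
        · refine Set.disjoint_of_subset ?_ ?_ (hcastle.2 j j' hjj)
          · exact (Set.smul_set_mono ((hatomVb j σ).trans (hVbV j))).trans
              (Set.subset_iUnion₂_of_subset g hgS (subset_refl _))
          · exact (Set.smul_set_mono ((hatomVb j' σ').trans (hVbV j'))).trans
              (Set.subset_iUnion₂_of_subset g' hg'S (subset_refl _))
      · exact Set.disjoint_of_subset (hlevelSΩ j σ g hgS) (hlevelRΩc j' σ' g' hg'R)
          disjoint_compl_right
    · rcases Finset.mem_union.1 hg' with hg'S | hg'R
      · exact Set.disjoint_of_subset (hlevelRΩc j σ g hgR) (hlevelSΩ j' σ' g' hg'S)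
          disjoint_compl_left
      · obtain ⟨hne1, k, t, hgeq, hsub1⟩ := hlevelR j σ g hgR
        obtain ⟨hne2, k', t', hgeq', hsub2⟩ := hlevelR j' σ' g' hg'R
        have hl1 : g • atom j σ ⊆ piece k ⟨j, t⟩ := by
          rw [hgeq, ← hWpieceEq j t k]
          exact Set.smul_set_mono hsub1
        have hl2 : g' • atom j' σ' ⊆ piece k' ⟨j', t'⟩ := by
          rw [hgeq', ← hWpieceEq j' t' k']
          exact Set.smul_set_mono hsub2
        rcases eq_or_ne k k' with rfl | hkk
        · rcases eq_or_ne (⟨j, t⟩ : ι₂) (⟨j', t'⟩ : ι₂) with hpe | hpne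
          · have hjj : j = j' := congrArg Sigma.fst hpe
            subst hjj
            have htt : t = t' := by simpa using hpe
            subst htt
            have hgg : g = g' := by rw [hgeq, hgeq']
            subst hgg
            have hσσ : σ ≠ σ' := by
              intro h
              subst h
              rcases hcond with h | h
              · exact h rfl
              · exact h rfl
            exact smul_disj g (hatom_disj j σ σ' hσσ)
          · exact Set.disjoint_of_subset hl1 hl2 (hpiece_disj k k _ _ (Or.inr hpne))
        · exact Set.disjoint_of_subset hl1 hl2 (hpiece_disj k k' _ _ (Or.inl hkk))
  -- cardinality bound on R
  have hRcard : ∀ j σ, (R j σ).card ≤ (S' j).card := by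
    intro j σ
    rw [hR_def]
    simp only []
    refine (Finset.card_image_le).trans ?_
    have hattach : ((S' j).attach).card = (S' j).card := Finset.card_attach
    refine le_trans (Finset.card_le_card_of_injOn (fun q => q.2)
      (fun q _ => Finset.mem_attach _ _) ?_) (le_of_eq hattach)
    intro q hq q' hq' hqq
    simp only [Finset.coe_filter, Set.mem_setOf_eq] at hq hq'
    obtain ⟨-, hne, hsub⟩ := hq
    obtain ⟨-, -, hsub'⟩ := hq'
    have hq2 : q.2 = q'.2 := hqq
    have hk : q.1 = q'.1 := by
      by_contra hkk
      obtain ⟨z, hz⟩ := hne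
      have hz' := hsub' hz
      rw [← hq2] at hz'
      exact (hWdisj_k ⟨j, q.2⟩ q.1 q'.1 hkk).le_bot ⟨hsub hz, hz'⟩
    exact Prod.ext hk hq2
  haveI : Fintype J := hJ
  -- assemble the castle
  refine ⟨Σ j : J, (Q j → Bool), inferInstance, fun p => atom p.1 p.2, fun p => T p.1 p.2,
    fun p => hatomc p.1 p.2, ⟨?_, ?_⟩, ?_, ?_⟩
  · rintro ⟨j, σ⟩ g hg g' hg' hgg
    exact hMD ⟨j, σ⟩ ⟨j, σ⟩ g g' hg hg' (Or.inr hgg)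
  · intro p p' hpp
    simp only [towerSpan, Set.disjoint_iUnion_left, Set.disjoint_iUnion_right]
    intro g hg g' hg'
    exact hMD p p' g' g hg' hg (Or.inl hpp)
  · -- Folner invariance
    rintro ⟨j, σ⟩
    constructor
    · obtain ⟨s, hs⟩ := (hfol j).1
      exact ⟨s, Finset.mem_union_left _ hs⟩
    · intro s hsK
      have h1 := (hfol j).2 s hsK
      have hTeq : T j σ = S j ∪ R j σ := rfl
      have hsubsym : symmDiff (s • T j σ) (T j σ) ⊆
          (symmDiff (s • S j) (S j)) ∪ (s • R j σ) ∪ (R j σ) := by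
        intro x hx
        rw [Finset.mem_symmDiff, hTeq, Finset.smul_finset_union] at hx
        simp only [Finset.mem_union] at hx
        simp only [Finset.mem_union, Finset.mem_symmDiff]
        rcases hx with ⟨h1, h2⟩ | ⟨h1, h2⟩
        · rcases h1 with h1 | h1
          · exact Or.inl (Or.inl (Or.inl ⟨h1, fun h => h2 (Or.inl h)⟩))
          · exact Or.inl (Or.inr h1)
        · rcases h1 with h1 | h1
          · exact Or.inl (Or.inl (Or.inr ⟨h1, fun h => h2 (Or.inl h)⟩))
          · exact Or.inr h1
      have hcard1 : (symmDiff (s • T j σ) (T j σ)).card ≤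
          (symmDiff (s • S j) (S j)).card + 2 * (R j σ).card := by
        refine (Finset.card_le_card hsubsym).trans ?_
        refine (Finset.card_union_le _ _).trans ?_
        have h2 := Finset.card_union_le (symmDiff (s • S j) (S j)) (s • R j σ)
        have hcR : (s • R j σ).card = (R j σ).card := Finset.card_smul_finset s _
        omega
      have hTS : (S j).card ≤ (T j σ).card := Finset.card_le_card Finset.subset_union_left
      have hnpos : (0:ℝ) < (n:ℝ) := by
        have : (0:ℝ) < ((1:ℕ):ℝ) := by norm_num
        exact lt_of_lt_of_le this (Nat.cast_le.2 hn)
      have hn4 : (4:ℝ) ≤ (n:ℝ) * δ := by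
        rw [div_le_iff₀ hδ] at hnδ
        exact hnδ
      have hA : ((symmDiff (s • T j σ) (T j σ)).card : ℝ) ≤
          ((symmDiff (s • S j) (S j)).card : ℝ) + 2 * ((R j σ).card : ℝ) := by
        have h2 := (Nat.cast_le (α := ℝ)).2 hcard1
        rw [Nat.cast_add, Nat.cast_mul, Nat.cast_ofNat] at h2
        exact h2
      exact folner_arith hδ hnpos hn4 (Nat.cast_nonneg _) hA h1
        (Nat.cast_le.2 (hRcard j σ)) (hS'card j) (Nat.cast_le.2 hTS)
  · -- the levels cover X
    rw [Set.eq_univ_iff_forall]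
    intro x
    by_cases hxΩ : x ∈ Ω
    · obtain ⟨j, hj⟩ := Set.mem_iUnion.1 hxΩ
      obtain ⟨g, hgS, hxg⟩ := Set.mem_iUnion₂.1 hj
      obtain ⟨y, hy, rfl⟩ := hxg
      set σ : Q j → Bool := fun q => decide (y ∈ W ⟨j, q.2⟩ q.1) with hσ_def
      have hyatom : y ∈ atom j σ := by
        refine ⟨hy, Set.mem_iInter.2 fun q => ?_⟩
        simp only [hσ_def, Bool.cond_decide]
        by_cases hq : y ∈ W ⟨j, q.2⟩ q.1
        · rw [if_pos hq]
          exact hq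
        · rw [if_neg hq]
          exact hq
      exact Set.mem_iUnion.2 ⟨⟨j, σ⟩, Set.mem_biUnion (Finset.mem_union_left _ hgS)
        ⟨y, hyatom, rfl⟩⟩
    · have hxC0 : x ∈ C0 := by
        refine ⟨Set.mem_univ x, fun h => hxΩ (hΩ0Ω h)⟩
      rw [← hBunion] at hxC0
      obtain ⟨k, hk⟩ := Set.mem_iUnion.1 hxC0
      have hxB' : x ∈ B' k := ⟨hk, hxΩ⟩
      have hx2 : sk k • x ∈ sk k • B' k := ⟨x, hxB', rfl⟩
      obtain ⟨p, hp⟩ := Set.mem_iUnion.1 (hcovO' k hx2)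
      obtain ⟨j, t⟩ := p
      have hyW : (t : G)⁻¹ • (sk k • x) ∈ W ⟨j, t⟩ k := ⟨sk k • x, ⟨hx2, hp⟩, rfl⟩
      set y : X := (t : G)⁻¹ • (sk k • x) with hy_def
      have hyVb : y ∈ Vb j := hWVb j t k hyW
      set σ : Q j → Bool := fun q => decide (y ∈ W ⟨j, q.2⟩ q.1) with hσ_def
      have hyatom : y ∈ atom j σ := by
        refine ⟨hyVb, Set.mem_iInter.2 fun q => ?_⟩
        simp only [hσ_def, Bool.cond_decide]
        by_cases hq : y ∈ W ⟨j, q.2⟩ q.1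
        · rw [if_pos hq]
          exact hq
        · rw [if_neg hq]
          exact hq
      have hsubW : atom j σ ⊆ W ⟨j, t⟩ k := by
        refine hatom_subW j σ (k, t) ?_
        simp only [hσ_def]
        exact decide_eq_true hyW
      have hgR : (sk k)⁻¹ * (t : G) ∈ R j σ := by
        rw [hR_def]
        exact Finset.mem_image.2 ⟨(k, t), Finset.mem_filter.2
          ⟨Finset.mem_univ _, ⟨y, hyatom⟩, hsubW⟩, rfl⟩
      have hxy : ((sk k)⁻¹ * (t : G)) • y = x := by
        rw [hy_def, mul_smul, smul_inv_smul, inv_smul_smul]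
      refine Set.mem_iUnion.2 ⟨⟨j, σ⟩, Set.mem_biUnion (Finset.mem_union_right _ hgR) ?_⟩
      exact ⟨y, hyatom, hxy⟩

end Forward

/-- Theorem 10.2: a free action on a zero-dimensional compact metric space is
almost finite iff for every finite `K ⊆ G` and `δ > 0` there is a clopen castle with
`(K, δ)`-invariant shapes whose levels partition `X`. -/
theorem almostFinite_iff_clopen_castle
    (G X : Type) [Group G] [Countable G] [DecidableEq G]
    [MetricSpace X] [CompactSpace X]
    [MulAction G X] [ContinuousConstSMul G X]
    (hfree : IsFreeAction G X) (hzd : ZeroDimensional X) :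
    AlmostFinite G X ↔
      ∀ (K : Finset G) (δ : ℝ), 0 < δ →
        ∃ (I : Type) (_ : Fintype I) (V : I → Set X) (S : I → Finset G),
          (∀ i, IsClopen (V i)) ∧ IsCastle G X V S ∧
          (∀ i, FolnerInv G K δ (S i)) ∧
          (⋃ i, towerSpan G X (V i) (S i)) = Set.univ := by
  constructor
  · intro haf K δ hδ
    exact forward_direction hzd haf K δ hδ
  · intro h
    exact backward_direction hzd h

end Kerr
end

section
/- Suppose that a compact metric space X has covering dimension d < ∞ and let G ↷ X be a free continuous action of a countable discrete group which is coarsely almost finite. Then the action is d-almost finite. -/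
open Pointwise MeasureTheory
open scoped ENNReal NNReal

namespace Kerr


section Aux

variable {X : Type} [MetricSpace X]

/-- Distance-to-complement function used as a partition-of-unity substitute. -/
private noncomputable def phi (v : Set X) (x : X) : ℝ≥0∞ := EMetric.infEdist x vᶜ

private lemma phi_continuous (v : Set X) : Continuous (phi (X := X) v) :=
  EMetric.continuous_infEdist

private lemma phi_pos_iff {v : Set X} (hv : IsOpen v) (x : X) : x ∈ v ↔ 0 < phi v x := by
  have h1 : 0 < EMetric.infEdist x vᶜ ↔ x ∉ closure vᶜ :=
    EMetric.infEdist_pos_iff_notMem_closure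
  rw [(isClosed_compl_iff.mpr hv).closure_eq] at h1
  simpa [phi] using h1.symm

/-- The "argmax" sets of the functions `phi v`, `v ∈ F`, within the cover `𝒱`. -/
private def Wset (𝒱 F : Finset (Set X)) : Set X :=
  {x | F.Nonempty ∧ F ⊆ 𝒱 ∧ ∀ v ∈ F, 0 < phi v x ∧ ∀ w ∈ 𝒱, w ∉ F → phi w x < phi v x}

private lemma Wset_isOpen (𝒱 F : Finset (Set X)) : IsOpen (Wset 𝒱 F) := by
  classical
  by_cases h : F.Nonempty ∧ F ⊆ 𝒱
  · have heq : Wset 𝒱 F = ⋂ v ∈ F, ({x | 0 < phi v x} ∩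
        ⋂ w ∈ 𝒱.filter (fun w => w ∉ F), {x | phi w x < phi v x}) := by
      ext x
      simp only [Wset, Set.mem_setOf_eq, Set.mem_iInter, Set.mem_inter_iff, Finset.mem_filter]
      constructor
      · rintro ⟨-, -, h3⟩ v hv
        exact ⟨(h3 v hv).1, fun w hw => (h3 v hv).2 w hw.1 hw.2⟩
      · intro hx
        exact ⟨h.1, h.2, fun v hv => ⟨(hx v hv).1, fun w hw hwF => (hx v hv).2 w ⟨hw, hwF⟩⟩⟩
    rw [heq]
    refine isOpen_biInter_finset fun v _ => IsOpen.inter ?_ (isOpen_biInter_finset fun w _ => ?_)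
    · exact isOpen_lt continuous_const (phi_continuous v)
    · exact isOpen_lt (phi_continuous w) (phi_continuous v)
  · have heq : Wset 𝒱 F = ∅ := by
      ext x
      simp only [Wset, Set.mem_setOf_eq, Set.mem_empty_iff_false, iff_false]
      tauto
    rw [heq]; exact isOpen_empty

private lemma Wset_mem_of_mem {𝒱 F : Finset (Set X)} (h𝒱 : ∀ v ∈ 𝒱, IsOpen v)
    {v : Set X} (hv : v ∈ F) {x : X} (hx : x ∈ Wset 𝒱 F) : x ∈ v := by
  obtain ⟨-, hFsub, hF⟩ := hx
  exact (phi_pos_iff (h𝒱 v (hFsub hv)) x).mpr (hF v hv).1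

private lemma Wset_card {𝒱 F : Finset (Set X)} {d : ℕ} (h𝒱 : ∀ v ∈ 𝒱, IsOpen v)
    (hmult : ∀ x : X, {v : Set X | v ∈ 𝒱 ∧ x ∈ v}.ncard ≤ d + 1)
    {x : X} (hx : x ∈ Wset 𝒱 F) : F.card ≤ d + 1 := by
  have hFsub : F ⊆ 𝒱 := hx.2.1
  have hsub : (↑F : Set (Set X)) ⊆ {v : Set X | v ∈ 𝒱 ∧ x ∈ v} := fun v hv =>
    ⟨hFsub hv, Wset_mem_of_mem h𝒱 hv hx⟩
  calc F.card = (↑F : Set (Set X)).ncard := (Set.ncard_coe_finset F).symm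
    _ ≤ {v : Set X | v ∈ 𝒱 ∧ x ∈ v}.ncard :=
        Set.ncard_le_ncard hsub ((𝒱.finite_toSet).subset fun v hv => hv.1)
    _ ≤ d + 1 := hmult x

private lemma Wset_inj {𝒱 F F' : Finset (Set X)} {x : X}
    (hx : x ∈ Wset 𝒱 F) (hx' : x ∈ Wset 𝒱 F') (hcard : F.card = F'.card) : F = F' := by
  by_contra hne
  have h1 : ¬ F ⊆ F' := fun h => hne (Finset.eq_of_subset_of_card_le h hcard.ge)
  have h2 : ¬ F' ⊆ F := fun h => hne (Finset.eq_of_subset_of_card_le h hcard.le).symm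
  obtain ⟨v, hvF, hvF'⟩ := Finset.not_subset.mp h1
  obtain ⟨w, hwF', hwF⟩ := Finset.not_subset.mp h2
  obtain ⟨-, hFsub, hF⟩ := hx
  obtain ⟨-, hF'sub, hF'⟩ := hx'
  exact absurd ((hF v hvF).2 w (hF'sub hwF') hwF)
    (not_lt.mpr ((hF' w hwF').2 v (hFsub hvF) hvF').le)

private lemma Wset_cover {𝒱 : Finset (Set X)} (h𝒱 : ∀ v ∈ 𝒱, IsOpen v)
    (hcov : (⋃ u ∈ 𝒱, u) = Set.univ) (x : X) : ∃ F : Finset (Set X), x ∈ Wset 𝒱 F := by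
  classical
  have hx : x ∈ ⋃ u ∈ 𝒱, u := hcov ▸ Set.mem_univ x
  obtain ⟨v0, hv0, hxv0⟩ := Set.mem_iUnion₂.mp hx
  obtain ⟨vm, hvm, hmax⟩ := Finset.exists_max_image 𝒱 (fun v => phi v x) ⟨v0, hv0⟩
  refine ⟨𝒱.filter (fun v => ∀ w ∈ 𝒱, phi w x ≤ phi v x),
    ⟨vm, Finset.mem_filter.mpr ⟨hvm, hmax⟩⟩, Finset.filter_subset _ _, ?_⟩
  intro v hv
  obtain ⟨hv𝒱, hvmax⟩ := Finset.mem_filter.mp hv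
  constructor
  · exact lt_of_lt_of_le ((phi_pos_iff (h𝒱 v0 hv0) x).mp hxv0) (hvmax v0 hv0)
  · intro w hw hwF
    have hcw : ¬ ∀ w' ∈ 𝒱, phi w' x ≤ phi w x := fun hc =>
      hwF (Finset.mem_filter.mpr ⟨hw, hc⟩)
    push_neg at hcw
    obtain ⟨w', hw', hlt⟩ := hcw
    exact lt_of_lt_of_le hlt (hvmax w' hw')

end Aux


private lemma covDimLE_of_covdim_eq (X : Type) [TopologicalSpace X] (d : ℕ)
    (h : covdim X = (d : ℕ∞)) : CovDimLE X d := by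
  classical
  have hne : ∃ k : ℕ, CovDimLE X k := by
    by_contra hc
    push_neg at hc
    have hemp : {n : ℕ∞ | ∃ k : ℕ, n = (k : ℕ∞) ∧ CovDimLE X k} = ∅ := by
      ext n
      simp only [Set.mem_setOf_eq, Set.mem_empty_iff_false, iff_false]
      rintro ⟨k, -, hk⟩
      exact hc k hk
    rw [covdim, hemp, sInf_empty] at h
    exact (by simp : ((⊤ : ℕ∞) ≠ (d : ℕ∞))) h
  have hk1 : CovDimLE X (Nat.find hne) := Nat.find_spec hne
  have heq : covdim X = ((Nat.find hne : ℕ) : ℕ∞) := by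
    apply le_antisymm
    · exact sInf_le ⟨Nat.find hne, rfl, hk1⟩
    · apply le_sInf
      rintro n ⟨k, rfl, hk⟩
      exact_mod_cast Nat.find_min' hne hk
  rw [h] at heq
  have hdk : d = Nat.find hne := by exact_mod_cast heq
  rwa [hdk]

private lemma exists_unif_eps (G X : Type) [Group G] [MetricSpace X] [CompactSpace X]
    [MulAction G X] [ContinuousConstSMul G X] (T : Finset G) (η : ℝ) (hη : 0 < η) :
    ∃ ε : ℝ, 0 < ε ∧ ∀ s ∈ T, ∀ a b : X, dist a b < ε → dist (s • a) (s • b) < η := by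
  classical
  induction T using Finset.induction_on with
  | empty => exact ⟨1, one_pos, by simp⟩
  | @insert s T₀ _ ih =>
    obtain ⟨ε1, hε1, h1⟩ := ih
    have hu : UniformContinuous (fun x : X => s • x) :=
      CompactSpace.uniformContinuous_of_continuous (continuous_const_smul s)
    obtain ⟨ε2, hε2, h2⟩ := Metric.uniformContinuous_iff.mp hu η hη
    refine ⟨min ε1 ε2, lt_min hε1 hε2, ?_⟩
    intro g hg a b hab
    rcases Finset.mem_insert.mp hg with rfl | hg
    · exact h2 (hab.trans_le (min_le_right _ _))
    · exact h1 g hg a b (hab.trans_le (min_le_left _ _))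


/-- Lemma 11.5: a coarsely almost finite free action on a compact metric space
of covering dimension `d` is `d`-almost finite. -/
theorem mAlmostFinite_of_coarselyAlmostFinite
    (G X : Type) [Group G] [Countable G] [DecidableEq G]
    [MetricSpace X] [CompactSpace X]
    [MulAction G X] [ContinuousConstSMul G X]
    (hfree : IsFreeAction G X)
    (d : ℕ) (hd : covdim X = (d : ℕ∞))
    (hcaf : CoarselyAlmostFinite G X) :
    MAlmostFinite G X d := by
  classical
  have hcov : CovDimLE X d := covDimLE_of_covdim_eq X d hd
  intro n K δ hn hδ
  obtain ⟨I, hFin, V, S, S', hopen, htower, hcastle, hfol, hS'sub, hS'card, hsub⟩ :=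
    hcaf n K δ hn hδ
  haveI := hFin
  set T : Finset G := Finset.univ.biUnion S with hT
  obtain ⟨ε, hε, heps⟩ := exists_unif_eps G X T (δ / 2) (half_pos hδ)
  obtain ⟨t, ht⟩ := isCompact_univ.elim_finite_subcover
    (fun x : X => Metric.ball x (ε / 4)) (fun x => Metric.isOpen_ball)
    (fun x _ => Set.mem_iUnion.mpr ⟨x, Metric.mem_ball_self (by positivity)⟩)
  set U : Finset (Set X) := t.image (fun x => Metric.ball x (ε / 4)) with hU
  have hUopen : ∀ u ∈ U, IsOpen u := by
    intro u hu
    obtain ⟨x, -, rfl⟩ := Finset.mem_image.mp hu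
    exact Metric.isOpen_ball
  have hUcov : (⋃ u ∈ U, u) = Set.univ := by
    apply Set.eq_univ_of_univ_subset
    intro x hx
    obtain ⟨x0, hx0, hmem⟩ := Set.mem_iUnion₂.mp (ht (Set.mem_univ x))
    exact Set.mem_biUnion (Finset.mem_image_of_mem _ hx0) hmem
  obtain ⟨𝒱, h𝒱open, h𝒱cov, h𝒱ref, h𝒱mult⟩ := hcov U hUopen hUcov
  have hsmall : ∀ v ∈ 𝒱, ∀ a ∈ v, ∀ b ∈ v, dist a b < ε := by
    intro v hv a ha b hb
    obtain ⟨u, hu, hvu⟩ := h𝒱ref v hv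
    obtain ⟨x0, -, rfl⟩ := Finset.mem_image.mp hu
    have h1 : dist a x0 < ε / 4 := Metric.mem_ball.mp (hvu ha)
    have h2 : dist b x0 < ε / 4 := Metric.mem_ball.mp (hvu hb)
    have h3 := dist_triangle a x0 b
    have h4 : dist x0 b = dist b x0 := dist_comm x0 b
    linarith
  have hV2sub : ∀ p : I × Finset (Set X),
      V p.1 ∩ Wset 𝒱 p.2 ⊆ V p.1 := fun p => Set.inter_subset_left
  have hspan : ∀ R : I → Finset G,
      (⋃ p : I × Finset (Set X), towerSpan G X (V p.1 ∩ Wset 𝒱 p.2) (R p.1)) =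
        ⋃ i, towerSpan G X (V i) (R i) := by
    intro R
    apply Set.Subset.antisymm
    · refine Set.iUnion_subset fun p => ?_
      refine subset_trans ?_ (Set.subset_iUnion (fun i => towerSpan G X (V i) (R i)) p.1)
      exact Set.iUnion₂_mono fun s _ => Set.smul_set_mono Set.inter_subset_left
    · intro x hx
      obtain ⟨i, hxi⟩ := Set.mem_iUnion.mp hx
      obtain ⟨s, hs, hxs⟩ := Set.mem_iUnion₂.mp hxi
      obtain ⟨y, hy, rfl⟩ := Set.mem_smul_set.mp hxs
      obtain ⟨F, hyF⟩ := Wset_cover h𝒱open h𝒱cov y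
      exact Set.mem_iUnion.mpr ⟨(i, F),
        Set.mem_iUnion₂.mpr ⟨s, hs, Set.smul_mem_smul_set ⟨hy, hyF⟩⟩⟩
  refine ⟨I × Finset (Set X), fun p => V p.1 ∩ Wset 𝒱 p.2, fun p => S p.1,
    fun p => S' p.1, ?_, ?_, ?_, ?_, ?_, ?_, ?_, ?_⟩
  · exact fun p => (hopen p.1).inter (Wset_isOpen 𝒱 p.2)
  · intro p s hs u hu hsu
    exact (htower p.1 s hs u hu hsu).mono (Set.smul_set_mono (hV2sub p))
      (Set.smul_set_mono (hV2sub p))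
  · exact fun p => hfol p.1
  · intro p s hs
    dsimp only
    rcases Set.eq_empty_or_nonempty (V p.1 ∩ Wset 𝒱 p.2) with h | h
    · rw [h, Set.smul_set_empty]
      simpa [Metric.diam_empty] using hδ
    · obtain ⟨x0, -, hx0W⟩ := h
      obtain ⟨v, hv⟩ := hx0W.1
      have hFsub : p.2 ⊆ 𝒱 := hx0W.2.1
      have hWv : Wset 𝒱 p.2 ⊆ v := fun y hy => Wset_mem_of_mem h𝒱open hv hy
      have hsT : s ∈ T := Finset.mem_biUnion.mpr ⟨p.1, Finset.mem_univ _, hs⟩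
      have hdiam : Metric.diam (s • (V p.1 ∩ Wset 𝒱 p.2)) ≤ δ / 2 := by
        refine Metric.diam_le_of_forall_dist_le (le_of_lt (half_pos hδ)) ?_
        intro a ha b hb
        obtain ⟨a0, ha0, rfl⟩ := Set.mem_smul_set.mp ha
        obtain ⟨b0, hb0, rfl⟩ := Set.mem_smul_set.mp hb
        exact (heps s hsT a0 b0
          (hsmall v (hFsub hv) a0 (hWv ha0.2) b0 (hWv hb0.2))).le
      linarith [half_lt_self hδ]
  · refine ⟨fun p => ⟨min (p.2.card - 1) d, Nat.lt_succ_of_le (min_le_right _ _)⟩, ?_⟩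
    intro p q hpq hcol
    dsimp only
    by_cases hij : p.1 = q.1
    · have hVV : ∀ x, x ∈ V p.1 ∩ Wset 𝒱 p.2 → x ∈ V q.1 ∩ Wset 𝒱 q.2 → False := by
        intro x hxp hxq
        have hF : p.2 ≠ q.2 := fun h => hpq (Prod.ext hij h)
        have hcp : p.2.card ≤ d + 1 := Wset_card h𝒱open h𝒱mult hxp.2
        have hcq : q.2.card ≤ d + 1 := Wset_card h𝒱open h𝒱mult hxq.2
        have hposp : 0 < p.2.card := Finset.card_pos.mpr hxp.2.1
        have hposq : 0 < q.2.card := Finset.card_pos.mpr hxq.2.1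
        have hval : min (p.2.card - 1) d = min (q.2.card - 1) d := congrArg Fin.val hcol
        have hcards : p.2.card = q.2.card := by omega
        exact hF (Wset_inj hxp.2 hxq.2 hcards)
      rw [Set.disjoint_left]
      intro x hx hx'
      obtain ⟨s, hs, hxs⟩ := Set.mem_iUnion₂.mp hx
      obtain ⟨u, hu, hxu⟩ := Set.mem_iUnion₂.mp hx'
      by_cases hsu : s = u
      · subst hsu
        obtain ⟨a, ha, haeq⟩ := Set.mem_smul_set.mp hxs
        obtain ⟨b, hb, hbeq⟩ := Set.mem_smul_set.mp hxu
        have hab : a = b := smul_left_cancel s (haeq.trans hbeq.symm)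
        exact hVV a ha (hab ▸ hb)
      · have hu' : u ∈ S p.1 := by rw [hij]; exact hu
        have hdisj := htower p.1 s hs u hu' hsu
        rw [Set.disjoint_left] at hdisj
        refine hdisj (Set.smul_set_mono (hV2sub p) hxs) ?_
        have : x ∈ u • V q.1 := Set.smul_set_mono (hV2sub q) hxu
        rwa [← hij] at this
    · refine Disjoint.mono ?_ ?_ (hcastle.2 p.1 q.1 hij)
      · exact Set.iUnion₂_mono fun s _ =>
          Set.smul_set_mono ((hV2sub p).trans subset_closure)
      · exact Set.iUnion₂_mono fun s _ =>
          Set.smul_set_mono ((hV2sub q).trans subset_closure)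
  · exact fun p => hS'sub p.1
  · exact fun p => hS'card p.1
  · show SubEquivM G X 0
      (Set.univ \ ⋃ p : I × Finset (Set X), towerSpan G X (V p.1 ∩ Wset 𝒱 p.2) (S p.1))
      (⋃ p : I × Finset (Set X), towerSpan G X (V p.1 ∩ Wset 𝒱 p.2) (S' p.1))
    rw [hspan S, hspan S']
    exact hsub


end Kerr
end
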